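/- Identity for deviations from canonical equilibrium: let B be a finite nonempty type, H_B : Matrix B B ℂ Hermitian, b > 0, and ρ the Gibbs state of H_B at inverse temperature b. Then for every density matrix σ on B, (Matrix.trace ((σ - ρ) * H_B)).re = b⁻¹ * (S(σ‖ρ) + S(σ) - S(ρ)). -/

import Mathlib

open Matrix Kronecker
open scoped ComplexOrder

noncomputable section

/-- A density matrix: positive semidefinite with trace 1. -/
def IsDensityMatrix {ι : Type*} [Fintype ι] (ρ : Matrix ι ι ℂ) : Prop :=
  ρ.PosSemidef ∧ ρ.trace = 1

/-- The matrix exponential. -/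
noncomputable def mexp {ι : Type*} [Fintype ι] [DecidableEq ι] (M : Matrix ι ι ℂ) :
    Matrix ι ι ℂ :=
  NormedSpace.exp M

/-- Von Neumann entropy of a (Hermitian) matrix, via its eigenvalues. -/
noncomputable def vnEntropy {ι : Type*} [Fintype ι] [DecidableEq ι] (ρ : Matrix ι ι ℂ) : ℝ :=
  if h : ρ.IsHermitian then -∑ i, h.eigenvalues i * Real.log (h.eigenvalues i) else 0

/-- The Gibbs state of the Hamiltonian `H` at inverse temperature `b`. -/
noncomputable def gibbs {ι : Type*} [Fintype ι] [DecidableEq ι] (H : Matrix ι ι ℂ) (b : ℝ) :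
    Matrix ι ι ℂ :=
  (Matrix.trace (mexp (-b • H)))⁻¹ • mexp (-b • H)

/-- Equilibrium energy of the bath. -/
noncomputable def eqEnergy {ι : Type*} [Fintype ι] [DecidableEq ι] (H : Matrix ι ι ℂ) (b : ℝ) : ℝ :=
  (Matrix.trace (gibbs H b * H)).re

/-- Partial trace over the second (bath) factor. -/
def ptraceB {A B : Type*} [Fintype B] (M : Matrix (A × B) (A × B) ℂ) : Matrix A A ℂ :=
  Matrix.of fun a a' => ∑ k : B, M (a, k) (a', k)

/-- Partial trace over the first (device) factor. -/
def ptraceA {A B : Type*} [Fintype A] (M : Matrix (A × B) (A × B) ℂ) : Matrix B B ℂ :=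
  Matrix.of fun k k' => ∑ a : A, M (a, k) (a, k')

/-- The heat transfer operator of a realization setup. -/
noncomputable def hto {A B : Type*} [Fintype A] [DecidableEq A] [Fintype B] [DecidableEq B]
    (H_B : Matrix B B ℂ) (b : ℝ) (U : Matrix (A × B) (A × B) ℂ) : Matrix A A ℂ :=
  ptraceB (((1 : Matrix A A ℂ) ⊗ₖ gibbs H_B b) * Uᴴ * ((1 : Matrix A A ℂ) ⊗ₖ H_B) * U)
    - eqEnergy H_B b • (1 : Matrix A A ℂ)

/-- Matrix logarithm of a Hermitian matrix through the continuous functional calculus. -/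
noncomputable def mlog {ι : Type*} [Fintype ι] [DecidableEq ι] (ρ : Matrix ι ι ℂ) :
    Matrix ι ι ℂ :=
  if h : ρ.IsHermitian then h.cfc Real.log else 0

/-- Quantum relative entropy `S(σ‖ρ)`. -/
noncomputable def relEntropy {ι : Type*} [Fintype ι] [DecidableEq ι] (σ ρ : Matrix ι ι ℂ) : ℝ :=
  (Matrix.trace (σ * (mlog σ - mlog ρ))).re

end

namespace DevAux

variable {ι : Type*} [Fintype ι] [DecidableEq ι]

lemma conj_mul_conj (U : Matrix.unitaryGroup ι ℂ) (D₁ D₂ : Matrix ι ι ℂ) :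
    ((U : Matrix ι ι ℂ) * D₁ * star (U : Matrix ι ι ℂ))
        * ((U : Matrix ι ι ℂ) * D₂ * star (U : Matrix ι ι ℂ))
      = (U : Matrix ι ι ℂ) * (D₁ * D₂) * star (U : Matrix ι ι ℂ) := by
  have h := Matrix.UnitaryGroup.star_mul_self U
  simp only [mul_assoc]
  rw [← mul_assoc (star (U : Matrix ι ι ℂ)) (U : Matrix ι ι ℂ), h, one_mul]

lemma trace_conj (U : Matrix.unitaryGroup ι ℂ) (D : Matrix ι ι ℂ) :
    ((U : Matrix ι ι ℂ) * D * star (U : Matrix ι ι ℂ)).trace = D.trace := by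
  rw [Matrix.trace_mul_comm, ← mul_assoc, Matrix.UnitaryGroup.star_mul_self, one_mul]

lemma cfc_mul_cfc {A : Matrix ι ι ℂ} (hA : A.IsHermitian) (f g : ℝ → ℝ) :
    hA.cfc f * hA.cfc g = hA.cfc (fun x => f x * g x) := by
  simp only [Matrix.IsHermitian.cfc, Unitary.conjStarAlgAut_apply]
  rw [conj_mul_conj, diagonal_mul_diagonal]
  simp only [Function.comp_def, Complex.ofReal_mul, RCLike.ofReal_mul]

lemma cfc_id {A : Matrix ι ι ℂ} (hA : A.IsHermitian) : hA.cfc (fun x => x) = A := by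
  rw [Matrix.IsHermitian.cfc]
  exact hA.spectral_theorem.symm

lemma trace_cfc {A : Matrix ι ι ℂ} (hA : A.IsHermitian) (f : ℝ → ℝ) :
    (hA.cfc f).trace = ((∑ i, f (hA.eigenvalues i) : ℝ) : ℂ) := by
  rw [Matrix.IsHermitian.cfc, Unitary.conjStarAlgAut_apply, trace_conj, Matrix.trace_diagonal]
  push_cast
  rfl

lemma trace_mul_cfc {A : Matrix ι ι ℂ} (hA : A.IsHermitian) (f : ℝ → ℝ) :
    (A * hA.cfc f).trace = ((∑ i, hA.eigenvalues i * f (hA.eigenvalues i) : ℝ) : ℂ) := by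
  calc (A * hA.cfc f).trace
      = (hA.cfc (fun x => x) * hA.cfc f).trace := by rw [cfc_id]
    _ = (hA.cfc (fun x => x * f x)).trace := by rw [cfc_mul_cfc]
    _ = _ := trace_cfc hA _

lemma smul_diagonal_ofReal (c : ℝ) (f : ι → ℝ) :
    c • diagonal ((RCLike.ofReal ∘ f : ι → ℂ)) = diagonal (RCLike.ofReal ∘ fun i => c * f i) := by
  ext i j
  by_cases h : i = j <;>
    simp [Matrix.diagonal_apply, h, Complex.real_smul]

lemma csmul_diagonal_ofReal (c : ℝ) (f : ι → ℝ) :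
    ((c : ℂ)) • diagonal ((RCLike.ofReal ∘ f : ι → ℂ))
      = diagonal (RCLike.ofReal ∘ fun i => c * f i) := by
  ext i j
  by_cases h : i = j <;>
    simp [Matrix.diagonal_apply, h]

end DevAux

/-- Identity for deviations from canonical equilibrium. -/
theorem deviation_from_equilibrium_identity
    {B : Type*} [Fintype B] [DecidableEq B] [Nonempty B]
    (H_B : Matrix B B ℂ) (hH : H_B.IsHermitian) {b : ℝ} (hb : 0 < b)
    (σ : Matrix B B ℂ) (hσ : IsDensityMatrix σ) :
    (Matrix.trace ((σ - gibbs H_B b) * H_B)).re =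
      b⁻¹ * (relEntropy σ (gibbs H_B b) + vnEntropy σ - vnEntropy (gibbs H_B b)) := by
  classical
  set lam := hH.eigenvalues with hlam
  set r : ℝ := ∑ i, Real.exp (-(b * lam i)) with hr_def
  have hr : 0 < r := Finset.sum_pos (fun i _ => Real.exp_pos _) Finset.univ_nonempty
  set U := hH.eigenvectorUnitary with hU
  have hmulstar : (U : Matrix B B ℂ) * star (U : Matrix B B ℂ) = 1 := U.2.2
  -- exp as cfc
  have hE : mexp (-b • H_B) = hH.cfc (fun x => Real.exp (-(b * x))) := by
    have h1 : -b • H_B = (U : Matrix B B ℂ) *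
        diagonal (RCLike.ofReal ∘ (fun i => -b * lam i)) * star (U : Matrix B B ℂ) := by
      calc -b • H_B
          = -b • ((U : Matrix B B ℂ) * diagonal (RCLike.ofReal ∘ lam)
              * star (U : Matrix B B ℂ)) := by congr 1; exact hH.spectral_theorem
        _ = (U : Matrix B B ℂ) * (-b • diagonal (RCLike.ofReal ∘ lam))
              * star (U : Matrix B B ℂ) := by
            rw [← smul_mul_assoc, ← mul_smul_comm]
        _ = _ := by rw [DevAux.smul_diagonal_ofReal]
    have hinv : (U : Matrix B B ℂ)⁻¹ = star (U : Matrix B B ℂ) :=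
      Matrix.inv_eq_right_inv hmulstar
    have hunit : IsUnit (U : Matrix B B ℂ) :=
      isUnit_iff_isUnit_det _ |>.mpr (Matrix.UnitaryGroup.det_isUnit U)
    have hdexp : NormedSpace.exp (RCLike.ofReal ∘ (fun i => -b * lam i) : B → ℂ)
        = (RCLike.ofReal ∘ (fun x => Real.exp (-(b * x))) ∘ lam : B → ℂ) := by
      rw [Pi.exp_def]
      funext i
      rw [← Complex.exp_eq_exp_ℂ]
      show Complex.exp ((-b * lam i : ℝ) : ℂ) = ((Real.exp (-(b * lam i)) : ℝ) : ℂ)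
      rw [Complex.ofReal_exp]
      norm_num
    rw [mexp, h1, ← hinv, Matrix.exp_conj _ _ hunit, Matrix.exp_diagonal, hinv,
      Matrix.IsHermitian.cfc, Unitary.conjStarAlgAut_apply, hdexp]
  have htr : Matrix.trace (mexp (-b • H_B)) = (r : ℂ) := by
    rw [hE, DevAux.trace_cfc hH]
  have hgibbs : gibbs H_B b = hH.cfc (fun x => r⁻¹ * Real.exp (-(b * x))) := by
    rw [gibbs, htr, hE]
    rw [Matrix.IsHermitian.cfc, Matrix.IsHermitian.cfc, Unitary.conjStarAlgAut_apply,
      Unitary.conjStarAlgAut_apply, ← smul_mul_assoc, ← mul_smul_comm,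
      ← Complex.ofReal_inv, DevAux.csmul_diagonal_ofReal]
    rfl
  have hsa : IsSelfAdjoint H_B := hH
  have hherm : (gibbs H_B b).IsHermitian := by
    rw [hgibbs, ← Matrix.IsHermitian.cfc_eq hH]
    exact cfc_predicate _ H_B
  have htrρ : (gibbs H_B b).trace = 1 := by
    rw [gibbs, htr, Matrix.trace_smul, htr, smul_eq_mul, ← Complex.ofReal_inv,
      ← Complex.ofReal_mul, inv_mul_cancel₀ hr.ne']
    norm_num
  -- mlog of gibbs
  have hmlog : mlog (gibbs H_B b) = hH.cfc (fun x => Real.log r⁻¹ + -(b * x)) := by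
    rw [mlog, dif_pos hherm, ← Matrix.IsHermitian.cfc_eq hherm, hgibbs,
      ← Matrix.IsHermitian.cfc_eq hH,
      ← cfc_comp Real.log (fun x => r⁻¹ * Real.exp (-(b * x))) H_B hsa
        (Real.continuousOn_log.mono (by
          rintro x ⟨y, -, rfl⟩
          simp only [Set.mem_compl_iff, Set.mem_singleton_iff]
          positivity))
        ((continuous_const.mul (Real.continuous_exp.comp (by fun_prop))).continuousOn)]
    rw [show Real.log ∘ (fun x => r⁻¹ * Real.exp (-(b * x)))
          = fun x => Real.log r⁻¹ + -(b * x) from by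
        funext x
        simp [Function.comp, Real.log_mul (by positivity : r⁻¹ ≠ 0) (Real.exp_ne_zero _),
          Real.log_exp]]
    rw [Matrix.IsHermitian.cfc_eq hH]
  have hmlog2 : mlog (gibbs H_B b) =
      ((Real.log r⁻¹ : ℝ) : ℂ) • (1 : Matrix B B ℂ) + ((-b : ℝ) : ℂ) • H_B := by
    rw [hmlog, Matrix.IsHermitian.cfc]
    have hdiag : diagonal (RCLike.ofReal ∘ (fun x => Real.log r⁻¹ + -(b * x)) ∘ lam)
        = ((Real.log r⁻¹ : ℝ) : ℂ) • (1 : Matrix B B ℂ)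
          + ((-b : ℝ) : ℂ) • diagonal (RCLike.ofReal ∘ lam) := by
      ext i j
      by_cases h : i = j <;>
        simp [Matrix.diagonal_apply, Matrix.one_apply, h]
    rw [hdiag, Unitary.conjStarAlgAut_apply, mul_add, add_mul, mul_smul_comm, smul_mul_assoc, mul_smul_comm,
      smul_mul_assoc, mul_one, hmulstar]
    congr 2; exact hH.spectral_theorem.symm
  -- trace identity against mlog ρ
  have hXtrace : ∀ X : Matrix B B ℂ, X.trace = 1 →
      (Matrix.trace (X * mlog (gibbs H_B b))).re
        = Real.log r⁻¹ - b * (Matrix.trace (X * H_B)).re := by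
    intro X hX
    rw [hmlog2, mul_add, Matrix.trace_add, mul_smul_comm, mul_smul_comm, mul_one,
      Matrix.trace_smul, Matrix.trace_smul, hX, smul_eq_mul, smul_eq_mul, mul_one]
    simp [Complex.add_re, Complex.re_ofReal_mul]
    ring
  -- entropy as trace
  have hvn : ∀ (A : Matrix B B ℂ) (hA : A.IsHermitian),
      (Matrix.trace (A * mlog A)).re = -vnEntropy A := by
    intro A hA
    rw [mlog, dif_pos hA, vnEntropy, dif_pos hA, DevAux.trace_mul_cfc hA,
      Complex.ofReal_re, neg_neg]
  have hσherm : σ.IsHermitian := hσ.1.1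
  have hσtr := hσ.2
  -- assemble
  have h1 : relEntropy σ (gibbs H_B b)
      = -vnEntropy σ - (Real.log r⁻¹ - b * (Matrix.trace (σ * H_B)).re) := by
    rw [relEntropy, mul_sub, Matrix.trace_sub, Complex.sub_re, hvn σ hσherm,
      hXtrace σ hσtr]
  have h2 : vnEntropy (gibbs H_B b)
      = -(Real.log r⁻¹ - b * (Matrix.trace (gibbs H_B b * H_B)).re) := by
    have ha := hvn (gibbs H_B b) hherm
    rw [hXtrace _ htrρ] at ha
    linarith
  rw [h1, h2, sub_mul, Matrix.trace_sub, Complex.sub_re]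
  field_simp
  ring
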